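/- arXiv:2003.07231 — 5 statements merged into one kernel-verified Lean document; each statement's English description precedes it below -/
import Mathlib

section
/- Assume g(A N, ξ) = 0. Then the normal Jacobi operator annihilates A N and the tangential part of J A ξ: R̄(A N, N)N = 0 and R̄(φ(A ξ), N)N = 0, where φ(X) := J X - g(J X, N)·N. -/
noncomputable section

variable {V : Type*}

/-- The real inner product `g(x,y) = Re⟨x,y⟩` induced by the Hermitian inner product. -/
def g [NormedAddCommGroup V] [InnerProductSpace ℂ V] (x y : V) : ℝ := (inner ℂ x y : ℂ).re

/-- The curvature tensor of the complex quadric, modeled on a complex inner product space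
with real structure `A` and complex structure `J = i·`. -/
def Rbar [NormedAddCommGroup V] [InnerProductSpace ℂ V] (A : V →ₗ[ℝ] V) (X Y Z : V) : V :=
  g Y Z • X - g X Z • Y + g (Complex.I • Y) Z • (Complex.I • X)
    - g (Complex.I • X) Z • (Complex.I • Y)
    - (2 * g (Complex.I • X) Y) • (Complex.I • Z)
    + g (A Y) Z • A X - g (A X) Z • A Y
    + g (Complex.I • A Y) Z • (Complex.I • A X)
    - g (Complex.I • A X) Z • (Complex.I • A Y)

/-- The tangential part of `J X` on the hypersurface tangent space. -/
def phi [NormedAddCommGroup V] [InnerProductSpace ℂ V] (N X : V) : V :=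
  Complex.I • X - g (Complex.I • X) N • N

section Aux
variable [NormedAddCommGroup V] [InnerProductSpace ℂ V]

lemma g_add_left (x x' y : V) : g (x + x') y = g x y + g x' y := by
  simp [g, inner_add_left]

lemma g_neg_left (x y : V) : g (-x) y = - g x y := by
  simp [g, inner_neg_left]

lemma g_rsmul_left (r : ℝ) (x y : V) : g (r • x) y = r * g x y := by
  rw [g, ← Complex.coe_smul, inner_smul_left]; simp [g]

lemma g_I_left (x y : V) : g (Complex.I • x) y = (inner ℂ x y : ℂ).im := by
  rw [g, inner_smul_left]; simp [Complex.mul_re]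

lemma Rbar_add_left (A : V →ₗ[ℝ] V) (x x' Y Z : V) :
    Rbar A (x + x') Y Z = Rbar A x Y Z + Rbar A x' Y Z := by
  simp only [Rbar, smul_add, map_add, g_add_left, add_smul, mul_add]
  abel

lemma Rbar_neg_left (A : V →ₗ[ℝ] V) (x Y Z : V) :
    Rbar A (-x) Y Z = -Rbar A x Y Z := by
  simp only [Rbar, smul_neg, map_neg, g_neg_left, neg_smul, mul_neg]
  abel

lemma Rbar_rsmul_left (A : V →ₗ[ℝ] V) (r : ℝ) (x Y Z : V) :
    Rbar A (r • x) Y Z = r • Rbar A x Y Z := by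
  simp only [Rbar, map_smul, smul_comm Complex.I (r : ℝ), g_rsmul_left]
  module

end Aux

/-- If `g(AN, ξ) = 0`, then the normal Jacobi operator annihilates `AN` and the
tangential part `φ(Aξ)` of `J A ξ`. -/
theorem stmt_5 [NormedAddCommGroup V] [InnerProductSpace ℂ V]
    (A : V →ₗ[ℝ] V)
    (hA_invol : ∀ x, A (A x) = x)
    (hA_antiJ : ∀ x, A (Complex.I • x) = -(Complex.I • A x))
    (hA_herm : ∀ x y, (inner ℂ (A x) (A y) : ℂ) = inner ℂ y x)
    (N : V) (hN : ‖N‖ = 1)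
    (ξ : V) (hξ : ξ = -(Complex.I • N))
    (hANξ : g (A N) ξ = 0) :
    Rbar A (A N) N N = 0 ∧ Rbar A (phi N (A ξ)) N N = 0 := by
  have hNN : (inner ℂ N N : ℂ) = 1 := by
    rw [inner_self_eq_norm_sq_to_K, hN]; norm_num
  have hIm : ((inner ℂ (A N) N : ℂ)).im = 0 := by
    have h := hANξ
    rw [hξ] at h
    simp [g, inner_neg_right, inner_smul_right, Complex.mul_re] at h
    exact h
  have h1 : g N N = 1 := by rw [g, hNN]; simp
  have h2 : g (Complex.I • N) N = 0 := by rw [g_I_left, hNN]; simp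
  have h3 : g (Complex.I • A N) N = 0 := by rw [g_I_left, hIm]
  have key1 : Rbar A (A N) N N = 0 := by
    rw [Rbar]
    simp only [hA_invol, h1, h2, h3]
    simp only [one_smul, zero_smul, mul_zero, zero_smul]
    abel
  have key2 : Rbar A N N N = 0 := by
    rw [Rbar]
    simp only [h2, mul_zero, zero_smul]
    abel
  refine ⟨key1, ?_⟩
  have hAξ : A ξ = Complex.I • A N := by
    rw [hξ, map_neg, hA_antiJ, neg_neg]
  have hφ : phi N (A ξ) = -(A N) + g (A N) N • N := by
    rw [phi, hAξ, smul_smul, Complex.I_mul_I, neg_one_smul, g_neg_left, neg_smul,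
      sub_neg_eq_add]
  rw [hφ, Rbar_add_left, Rbar_neg_left, key1, Rbar_rsmul_left, key2]
  simp
end
end

section
/- Suppose the unit normal N is 𝔄-principal, i.e. A N = N. Then A ξ = -ξ, A maps T := {Y ∈ V : g(Y,N) = 0} into itself, and for every Y ∈ T the normal Jacobi operator satisfies R̄(Y,N)N = Y + 2 η(Y)·ξ + A Y, where η(Y) := g(Y,ξ). -/
noncomputable section

variable {V : Type*}

/-- If the unit normal `N` is 𝔄-principal (`AN = N`), then `Aξ = -ξ`, `A` preserves the
tangent space `T = {Y : g(Y,N) = 0}`, and on `T` the normal Jacobi operator is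
`R̄(Y,N)N = Y + 2η(Y)·ξ + AY`, where `η(Y) = g(Y,ξ)`. -/
theorem stmt_6 [NormedAddCommGroup V] [InnerProductSpace ℂ V]
    (A : V →ₗ[ℝ] V)
    (hA_invol : ∀ x, A (A x) = x)
    (hA_antiJ : ∀ x, A (Complex.I • x) = -(Complex.I • A x))
    (hA_herm : ∀ x y, (inner ℂ (A x) (A y) : ℂ) = inner ℂ y x)
    (N : V) (hN : ‖N‖ = 1)
    (ξ : V) (hξ : ξ = -(Complex.I • N))
    (hAN : A N = N) :
    A ξ = -ξ ∧
    (∀ Y : V, g Y N = 0 → g (A Y) N = 0) ∧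
    (∀ Y : V, g Y N = 0 → Rbar A Y N N = Y + (2 * g Y ξ) • ξ + A Y) := by
  have hNN : (inner ℂ N N : ℂ) = 1 := by
    rw [inner_self_eq_norm_sq_to_K, hN]; norm_num
  have hAYN : ∀ Y : V, (inner ℂ (A Y) N : ℂ) = starRingEnd ℂ (inner ℂ Y N) := by
    intro Y
    rw [← inner_conj_symm]
    conv_lhs => rw [← hAN]
    rw [hA_herm]
  refine ⟨?_, ?_, ?_⟩
  · subst hξ
    rw [map_neg, hA_antiJ, hAN]
  · intro Y hY
    simp only [g] at *
    rw [hAYN, Complex.conj_re, hY]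
  · intro Y hY
    simp only [g] at hY
    set c : ℂ := inner ℂ Y N with hc
    simp only [Rbar, g, hξ, hAN, hA_antiJ]
    rw [hAYN Y]
    simp only [inner_smul_left, inner_smul_right, inner_neg_left, inner_neg_right,
      smul_neg, neg_smul, neg_neg, map_neg, map_mul, hNN, Complex.conj_I, ← hc,
      hAYN Y]
    simp only [Complex.mul_re, Complex.I_re, Complex.I_im, Complex.one_re, Complex.one_im,
      Complex.conj_re, Complex.conj_im, Complex.neg_re, Complex.neg_im, hY]
    ring_nf
    module
end
end

section
/- Suppose A N = N, let α ∈ ℝ, and let S : T → T be a g-symmetric real-linear map on T := {Y ∈ V : g(Y,N) = 0} satisfying A(S Y) = S Y - 2α·η(Y)·ξ for all Y ∈ T, where η(Y) := g(Y,ξ). Then S(A Y) = A(S Y) for all Y ∈ T, i.e. the shape operator commutes with the real structure A on the tangent space. -/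
noncomputable section

variable {V : Type*}

lemma g_symm [NormedAddCommGroup V] [InnerProductSpace ℂ V] (x y : V) : g x y = g y x := by
  simp only [g]
  rw [← inner_conj_symm x y, Complex.conj_re]

lemma g_sub_left [NormedAddCommGroup V] [InnerProductSpace ℂ V] (x y z : V) :
    g (x - y) z = g x z - g y z := by simp [g, inner_sub_left]

lemma g_sub_right [NormedAddCommGroup V] [InnerProductSpace ℂ V] (x y z : V) :
    g x (y - z) = g x y - g x z := by simp [g, inner_sub_right]

lemma g_smul_left [NormedAddCommGroup V] [InnerProductSpace ℂ V] (r : ℝ) (x y : V) :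
    g (r • x) y = r * g x y := by
  simp only [g]
  rw [← Complex.coe_smul, inner_smul_left]
  simp

lemma g_smul_right [NormedAddCommGroup V] [InnerProductSpace ℂ V] (r : ℝ) (x y : V) :
    g x (r • y) = r * g x y := by
  simp only [g]
  rw [← Complex.coe_smul, inner_smul_right]
  simp

lemma g_self [NormedAddCommGroup V] [InnerProductSpace ℂ V] (x : V) :
    g x x = ‖x‖ ^ 2 := by
  simp only [g]
  rw [inner_self_eq_norm_sq_to_K, ← RCLike.ofReal_pow]
  exact Complex.ofReal_re _

lemma inner_self_im' [NormedAddCommGroup V] [InnerProductSpace ℂ V] (x : V) :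
    (inner ℂ x x : ℂ).im = 0 := by
  rw [inner_self_eq_norm_sq_to_K, ← RCLike.ofReal_pow]
  exact Complex.ofReal_im _

/-- If `AN = N` and `S` is a `g`-symmetric shape operator on `T = {Y : g(Y,N) = 0}`
satisfying the Weingarten identity `A(SY) = SY - 2αη(Y)ξ` on `T`, then `S` commutes with
the real structure `A` on `T`. -/
theorem stmt_9 [NormedAddCommGroup V] [InnerProductSpace ℂ V]
    (A : V →ₗ[ℝ] V)
    (hA_invol : ∀ x, A (A x) = x)
    (hA_antiJ : ∀ x, A (Complex.I • x) = -(Complex.I • A x))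
    (hA_herm : ∀ x y, (inner ℂ (A x) (A y) : ℂ) = inner ℂ y x)
    (N : V) (hN : ‖N‖ = 1)
    (ξ : V) (hξ : ξ = -(Complex.I • N))
    (hAN : A N = N)
    (α : ℝ) (S : V →ₗ[ℝ] V)
    (hS_tan : ∀ Y : V, g Y N = 0 → g (S Y) N = 0)
    (hS_sym : ∀ X Y : V, g X N = 0 → g Y N = 0 → g (S X) Y = g X (S Y))
    (hWein : ∀ Y : V, g Y N = 0 → A (S Y) = S Y - (2 * α * g Y ξ) • ξ) :
    ∀ Y : V, g Y N = 0 → S (A Y) = A (S Y) := by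
  intro Y hY
  have hgAA : ∀ x y : V, g (A x) (A y) = g y x := fun x y => by simp [g, hA_herm]
  have hξN : g ξ N = 0 := by
    simp [g, hξ, inner_smul_left, Complex.mul_re, inner_self_im' N, hN]
  have hNN : g N N = 1 := by rw [g_self, hN]; norm_num
  -- tangency of A X for tangent X
  have htan : ∀ X : V, g X N = 0 → g (A X) N = 0 := by
    intro X hX
    have : g (A X) (A N) = g N X := hgAA X N
    rw [hAN] at this
    rw [this, g_symm]; exact hX
  have hAY : g (A Y) N = 0 := htan Y hY
  -- the difference vector
  set X := S (A Y) - A (S Y) with hXdef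
  -- X is tangent
  have hASYtan : g (A (S Y)) N = 0 := htan _ (hS_tan Y hY)
  have hXN : g X N = 0 := by
    rw [hXdef, g_sub_left, hS_tan _ hAY, hASYtan, sub_zero]
  -- g X Z = 0 for tangent Z
  have hXtanZ : ∀ Z : V, g Z N = 0 → g X Z = 0 := by
    intro Z hZ
    have h1 : g (S (A Y)) Z = g (A Y) (S Z) := hS_sym _ _ hAY hZ
    have h2 : g (A Y) (S Z) = g (A (S Z)) Y := by
      conv_lhs => rw [← hA_invol (S Z)]
      exact hgAA Y (A (S Z))
    have h3 : g (A (S Z)) Y = g (S Z) Y - 2 * α * g Z ξ * g ξ Y := by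
      rw [hWein Z hZ, g_sub_left, g_smul_left]
    have h4 : g (A (S Y)) Z = g (S Y) Z - 2 * α * g Y ξ * g ξ Z := by
      rw [hWein Y hY, g_sub_left, g_smul_left]
    have h5 : g (S Z) Y = g (S Y) Z := by
      rw [g_symm, hS_sym Y Z hY hZ, g_symm]
    rw [hXdef, g_sub_left, h1, h2, h3, h4, h5, g_symm ξ Y, g_symm ξ Z]
    ring
  -- g X Z = 0 for all Z
  have hXall : ∀ Z : V, g X Z = 0 := by
    intro Z
    have htang : g (Z - g Z N • N) N = 0 := by
      rw [g_sub_left, g_smul_left, hNN]; ring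
    have key : g X (Z - g Z N • N) = g X Z - g Z N * g X N := by
      rw [g_sub_right, g_smul_right]
    have h0 := hXtanZ _ htang
    rw [key, hXN] at h0
    linarith
  have hX0 : X = 0 := by
    have := hXall X
    rw [g_self] at this
    have : ‖X‖ = 0 := by nlinarith [norm_nonneg X]
    exact norm_eq_zero.mp this
  have := sub_eq_zero.mp hX0
  exact this
end
end

section
/- Suppose A N = N and that A X = -X for every X ∈ C := {X ∈ V : g(X,N) = 0 and g(X,ξ) = 0}. Then C = {0}; equivalently, the complex dimension of V is at most 1. -/
noncomputable section

variable {V : Type*}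

/-- If `AN = N` and `AX = -X` for every `X` in `C = {X : g(X,N) = 0, g(X,ξ) = 0}`, then
`C = {0}`; equivalently the complex dimension of `V` is at most `1`. -/
theorem stmt_12 [NormedAddCommGroup V] [InnerProductSpace ℂ V] [FiniteDimensional ℂ V]
    (A : V →ₗ[ℝ] V)
    (hA_invol : ∀ x, A (A x) = x)
    (hA_antiJ : ∀ x, A (Complex.I • x) = -(Complex.I • A x))
    (hA_herm : ∀ x y, (inner ℂ (A x) (A y) : ℂ) = inner ℂ y x)
    (N : V) (hN : ‖N‖ = 1)
    (ξ : V) (hξ : ξ = -(Complex.I • N))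
    (hAN : A N = N)
    (hC : ∀ X : V, g X N = 0 → g X ξ = 0 → A X = -X) :
    (∀ X : V, g X N = 0 → g X ξ = 0 → X = 0) ∧ Module.finrank ℂ V ≤ 1 := by
  -- The two real conditions are equivalent to the complex condition ⟨X,N⟩ = 0.
  have hmem : ∀ X : V, g X N = 0 → g X ξ = 0 → (inner ℂ X N : ℂ) = 0 := by
    intro X h1 h2
    have hre : (inner ℂ X N : ℂ).re = 0 := h1
    have him : (inner ℂ X N : ℂ).im = 0 := by
      have : (inner ℂ X ξ : ℂ) = -(Complex.I * (inner ℂ X N : ℂ)) := by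
        rw [hξ, inner_neg_right, inner_smul_right]
      have h2' : (-(Complex.I * (inner ℂ X N : ℂ))).re = 0 := by
        rw [← this]; exact h2
      simpa using h2'
    exact Complex.ext hre him
  have hconv : ∀ X : V, (inner ℂ X N : ℂ) = 0 → g X N = 0 ∧ g X ξ = 0 := by
    intro X h
    constructor
    · show (inner ℂ X N : ℂ).re = 0; rw [h]; simp
    · show (inner ℂ X ξ : ℂ).re = 0
      rw [hξ, inner_neg_right, inner_smul_right, h]; simp
  have key : ∀ X : V, g X N = 0 → g X ξ = 0 → X = 0 := by
    intro X h1 h2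
    have hXN : (inner ℂ X N : ℂ) = 0 := hmem X h1 h2
    have hIXN : (inner ℂ (Complex.I • X) N : ℂ) = 0 := by
      rw [inner_smul_left, hXN]; simp
    obtain ⟨g1, g2⟩ := hconv (Complex.I • X) hIXN
    have hAX : A X = -X := hC X h1 h2
    have hAIX : A (Complex.I • X) = -(Complex.I • X) := hC _ g1 g2
    have : -(Complex.I • A X) = -(Complex.I • X) := by rw [← hA_antiJ]; exact hAIX
    rw [hAX, smul_neg, neg_neg] at this
    -- I • X = -(I • X)
    have h0 : Complex.I • X = 0 := by
      have h2' : (2 : ℂ) • (Complex.I • X) = 0 := by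
        rw [two_smul]; nth_rewrite 1 [this]; simp
      simpa using (smul_eq_zero.mp h2').resolve_left (by norm_num)
    have := congrArg (fun v => (-Complex.I) • v) h0
    simpa [smul_smul, Complex.I_mul_I] using this
  refine ⟨key, ?_⟩
  -- orthogonal complement of ℂ ∙ N is trivial, so V = ℂ ∙ N
  have hNne : N ≠ 0 := by
    intro h; rw [h] at hN; simp at hN
  have horth : (ℂ ∙ N)ᗮ = ⊥ := by
    rw [Submodule.eq_bot_iff]
    intro X hX
    have hXN : (inner ℂ X N : ℂ) = 0 := by
      have := Submodule.mem_orthogonal (ℂ ∙ N) X |>.mp hX N (Submodule.mem_span_singleton_self N)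
      simpa [inner_eq_zero_symm] using this
    obtain ⟨h1, h2⟩ := hconv X hXN
    exact key X h1 h2
  have htop : (ℂ ∙ N) = ⊤ := by
    have := Submodule.orthogonal_orthogonal (ℂ ∙ N)
    rw [horth] at this
    simpa using this.symm
  have : Module.finrank ℂ V = Module.finrank ℂ (ℂ ∙ N : Submodule ℂ V) := by
    rw [htop]; exact (finrank_top ℂ V).symm
  rw [this, finrank_span_singleton hNne]
end
end

section
/- Assume g(A ξ, ξ) = 0 and g(A N, ξ) = 0 (𝔄-isotropic unit normal), let T := {Y ∈ V : g(Y,N) = 0}, B(X) := A X - g(A X,N)N, and C := {X ∈ T : g(X,ξ) = 0}. If B(X) = g(A ξ, X)·ξ for every X ∈ C, then every X ∈ C satisfies X = g(A ξ, X)·A ξ + g(A N, X)·A N; consequently the real dimension of C is at most 2, i.e. the complex dimension of V is at most 2. -/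
noncomputable section

variable {V : Type*}

/-- The tangential part of `A X` on the hypersurface tangent space. -/
def B [NormedAddCommGroup V] [InnerProductSpace ℂ V] (A : V →ₗ[ℝ] V) (N X : V) : V :=
  A X - g (A X) N • N

/-- 𝔄-isotropic case: if `B(X) = g(Aξ,X)·ξ` for all `X ∈ C = {X : g(X,N)=0, g(X,ξ)=0}`,
then every `X ∈ C` equals `g(Aξ,X)·Aξ + g(AN,X)·AN`; hence `dim_ℝ C ≤ 2`, i.e. the
complex dimension of `V` is at most `2`. -/
theorem stmt_16 [NormedAddCommGroup V] [InnerProductSpace ℂ V] [FiniteDimensional ℂ V]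
    (A : V →ₗ[ℝ] V)
    (hA_invol : ∀ x, A (A x) = x)
    (hA_antiJ : ∀ x, A (Complex.I • x) = -(Complex.I • A x))
    (hA_herm : ∀ x y, (inner ℂ (A x) (A y) : ℂ) = inner ℂ y x)
    (N : V) (hN : ‖N‖ = 1)
    (ξ : V) (hξ : ξ = -(Complex.I • N))
    (hAξξ : g (A ξ) ξ = 0)
    (hANξ : g (A N) ξ = 0)
    (hB : ∀ X : V, g X N = 0 → g X ξ = 0 → B A N X = g (A ξ) X • ξ) :
    (∀ X : V, g X N = 0 → g X ξ = 0 →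
      X = g (A ξ) X • A ξ + g (A N) X • A N) ∧
    Module.finrank ℂ V ≤ 2 := by
  have key : ∀ X : V, g X N = 0 → g X ξ = 0 →
      X = g (A ξ) X • A ξ + g (A N) X • A N := by
    intro X hXN hXξ
    have h := hB X hXN hXξ
    have hAXN : g (A X) N = g (A N) X := by
      unfold g
      congr 1
      conv_lhs => rw [← hA_invol N]
      exact hA_herm X (A N)
    have hAX : A X = g (A ξ) X • ξ + g (A N) X • N := by
      have := h
      unfold B at this
      rw [hAXN] at this
      linear_combination (norm := module) this
    calc X = A (A X) := (hA_invol X).symm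
      _ = A (g (A ξ) X • ξ + g (A N) X • N) := by rw [hAX]
      _ = g (A ξ) X • A ξ + g (A N) X • A N := by
          rw [map_add, map_smul, map_smul]
  refine ⟨key, ?_⟩
  letI := Classical.decEq V
  letI : InnerProductSpace ℝ V := InnerProductSpace.complexToReal
  have : FiniteDimensional ℝ V := FiniteDimensional.trans ℝ ℂ V
  set W : Submodule ℝ V := Submodule.span ℝ {N, ξ} with hW
  have hWperp : Wᗮ ≤ Submodule.span ℝ {A ξ, A N} := by
    intro X hX
    have hmem : ∀ y ∈ ({N, ξ} : Set V), (inner ℝ y X : ℝ) = 0 := by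
      intro y hy
      exact hX y (Submodule.subset_span hy)
    have h1 : g X N = 0 := by
      have h : ((inner ℂ N X : ℂ)).re = 0 := hmem N (by simp)
      simp only [g, ← inner_conj_symm X N, Complex.conj_re]
      exact h
    have h2 : g X ξ = 0 := by
      have h : ((inner ℂ ξ X : ℂ)).re = 0 := hmem ξ (by simp)
      simp only [g, ← inner_conj_symm X ξ, Complex.conj_re]
      exact h
    rw [key X h1 h2]
    exact Submodule.add_mem _
      (Submodule.smul_mem _ _ (Submodule.subset_span (by simp)))
      (Submodule.smul_mem _ _ (Submodule.subset_span (by simp)))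
  have hperp_rank : Module.finrank ℝ Wᗮ ≤ 2 := by
    calc Module.finrank ℝ Wᗮ ≤ Module.finrank ℝ (Submodule.span ℝ {A ξ, A N}) :=
          Submodule.finrank_mono hWperp
      _ ≤ 2 := by
          have h : (↑({A ξ, A N} : Finset V) : Set V) = {A ξ, A N} := by simp
          rw [← h]
          exact (finrank_span_finset_le_card _).trans
            ((Finset.card_insert_le _ _).trans (by simp))
  have hW_rank : Module.finrank ℝ W ≤ 2 := by
    have h : (↑({N, ξ} : Finset V) : Set V) = {N, ξ} := by simp
    rw [hW, ← h]
    exact (finrank_span_finset_le_card _).trans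
      ((Finset.card_insert_le _ _).trans (by simp))
  have hsum : Module.finrank ℝ W + Module.finrank ℝ Wᗮ = Module.finrank ℝ V :=
    Submodule.finrank_add_finrank_orthogonal W
  have hVr : Module.finrank ℝ V = 2 * Module.finrank ℂ V := by
    rw [← Complex.finrank_real_complex]
    exact (Module.finrank_mul_finrank ℝ ℂ V).symm
  omega
end
end
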